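/- Let u : ℝⁿ → (-∞,∞] be convex, proper, lower semicontinuous. Then u is coercive (i.e., u(x) → ∞ as |x| → ∞) if and only if 0 lies in the interior of dom u*, where u* is the Legendre transform of u. -/

import Mathlib

open MeasureTheory Filter

noncomputable def conj {n : ℕ} (u : EuclideanSpace ℝ (Fin n) → EReal)
    (x : EuclideanSpace ℝ (Fin n)) : EReal :=
  ⨆ y, ((inner ℝ x y : ℝ) : EReal) - u y

/-- Convexity for extended-real-valued functions on `ℝⁿ`. -/
def ErealConvexOn {n : ℕ} (u : EuclideanSpace ℝ (Fin n) → EReal) : Prop :=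
  ∀ x y : EuclideanSpace ℝ (Fin n), ∀ a b : ℝ, 0 ≤ a → 0 ≤ b → a + b = 1 →
    u (a • x + b • y) ≤ (a : EReal) * u x + (b : EReal) * u y

/-- Proper: never `-∞` and not identically `+∞`. -/
def EProper {n : ℕ} (u : EuclideanSpace ℝ (Fin n) → EReal) : Prop :=
  (∀ x, u x ≠ ⊥) ∧ ∃ x, u x ≠ ⊤

/-- Coercive: `u x → ∞` as `‖x‖ → ∞`. -/
def ECoercive {n : ℕ} (u : EuclideanSpace ℝ (Fin n) → EReal) : Prop :=
  ∀ M : ℝ, ∃ R : ℝ, ∀ x, R ≤ ‖x‖ → (M : EReal) ≤ u x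

/-- Super-coercive: `u x / ‖x‖ → ∞` as `‖x‖ → ∞`. -/
def ESuperCoercive {n : ℕ} (u : EuclideanSpace ℝ (Fin n) → EReal) : Prop :=
  ∀ M : ℝ, ∃ R : ℝ, ∀ x, R ≤ ‖x‖ → ((M * ‖x‖ : ℝ) : EReal) ≤ u x

lemma erealExistsLt (x : EReal) (h : x ≠ ⊥) : ∃ r : ℝ, (r : EReal) < x := by
  induction x with
  | bot => exact absurd rfl h
  | coe r => exact ⟨r - 1, by exact_mod_cast sub_one_lt r⟩
  | top => exact ⟨0, EReal.coe_lt_top 0⟩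

lemma erealExistsGe (x : EReal) (h : x < ⊤) : ∃ r : ℝ, x ≤ (r : EReal) := by
  induction x with
  | bot => exact ⟨0, bot_le⟩
  | coe r => exact ⟨r, le_refl _⟩
  | top => exact absurd rfl (ne_of_lt h)

lemma erealSubGe (a c : ℝ) (x : EReal) (hx : x ≠ ⊥) (h : (a : EReal) - x ≤ (c : EReal)) :
    ((a - c : ℝ) : EReal) ≤ x := by
  induction x with
  | bot => exact absurd rfl hx
  | coe r =>
    rw [← EReal.coe_sub, EReal.coe_le_coe_iff] at h
    exact_mod_cast (by linarith : a - c ≤ r)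
  | top => exact le_top

lemma erealSubLe (a b : ℝ) (x : EReal) (hb : (b : EReal) ≤ x) :
    (a : EReal) - x ≤ ((a - b : ℝ) : EReal) := by
  induction x with
  | bot => exact absurd hb (by simp)
  | coe r =>
    rw [EReal.coe_le_coe_iff] at hb
    rw [← EReal.coe_sub]
    exact_mod_cast (by linarith : a - r ≤ a - b)
  | top =>
    rw [EReal.sub_top]
    exact bot_le

lemma bddBelowCompact {E : Type*} [MetricSpace E] {u : E → EReal}
    (hlsc : LowerSemicontinuous u) (hbot : ∀ x, u x ≠ ⊥) {K : Set E} (hK : IsCompact K) :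
    ∃ m : ℝ, ∀ y ∈ K, (m : EReal) ≤ u y := by
  choose r hrlt using fun y : E => erealExistsLt (u y) (hbot y)
  have hcov : K ⊆ ⋃ y ∈ K, {z | (r y : EReal) < u z} :=
    fun y hy => Set.mem_biUnion hy (hrlt y)
  obtain ⟨t, hts, hfin, hsub⟩ := hK.elim_finite_subcover_image
    (fun y _ => hlsc.isOpen_preimage (r y)) hcov
  rcases t.eq_empty_or_nonempty with rfl | hne
  · exact ⟨0, fun y hy => absurd (hsub hy) (by simp)⟩
  · obtain ⟨m, hmt, hm⟩ := Set.exists_min_image t r hfin hne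
    refine ⟨r m, fun y hy => ?_⟩
    obtain ⟨z, hz, hzy⟩ := Set.mem_iUnion₂.mp (hsub hy)
    have : r m ≤ r z := by
      rcases le_total (r m) (r z) with h | h
      · exact h
      · exact hm z hz
    exact le_of_lt (lt_of_le_of_lt (EReal.coe_le_coe_iff.mpr this) hzy)

lemma linearMinorant {n : ℕ} {u : EuclideanSpace ℝ (Fin n) → EReal}
    (hconv : ErealConvexOn u) (hproper : EProper u) (hlsc : LowerSemicontinuous u)
    (hcoer : ECoercive u) :
    ∃ ε C : ℝ, 0 < ε ∧ ∀ y, ((ε * ‖y‖ - C : ℝ) : EReal) ≤ u y := by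
  obtain ⟨hbot, x₀, hx₀⟩ := hproper
  set a : ℝ := (u x₀).toReal with ha
  have hux₀ : u x₀ = (a : EReal) := (EReal.coe_toReal hx₀ (hbot x₀)).symm
  obtain ⟨R, hR⟩ := hcoer (a + 1)
  set R' : ℝ := max (R + ‖x₀‖) 1 with hR'def
  have hR'pos : (0:ℝ) < R' := lt_of_lt_of_le one_pos (le_max_right _ _)
  have hRR' : R + ‖x₀‖ ≤ R' := le_max_left _ _
  obtain ⟨m, hm⟩ := bddBelowCompact hlsc hbot (isCompact_closedBall x₀ R')
  set C : ℝ := max ((R' + ‖x₀‖) / R' - m) (‖x₀‖ / R' - a) with hCdef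
  refine ⟨1 / R', C, by positivity, fun y => ?_⟩
  by_cases hy : ‖y - x₀‖ ≤ R'
  · have h1 : (m : EReal) ≤ u y := hm y (by rwa [Metric.mem_closedBall, dist_eq_norm])
    refine le_trans (EReal.coe_le_coe_iff.mpr ?_) h1
    have hyn : ‖y‖ ≤ R' + ‖x₀‖ := by
      have := norm_sub_norm_le y x₀
      linarith
    have h2 : (1/R') * ‖y‖ ≤ (R' + ‖x₀‖)/R' := by
      rw [one_div, div_eq_inv_mul]
      exact mul_le_mul_of_nonneg_left hyn (by positivity)
    have h3 : (R' + ‖x₀‖)/R' - m ≤ C := le_max_left _ _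
    linarith
  · push_neg at hy
    set d : ℝ := ‖y - x₀‖ with hddef
    have hdpos : (0:ℝ) < d := hR'pos.trans hy
    set t : ℝ := R' / d with htdef
    have ht0 : 0 < t := div_pos hR'pos hdpos
    have ht1 : t < 1 := (div_lt_one hdpos).mpr hy
    have htd : t * d = R' := div_mul_cancel₀ _ (ne_of_gt hdpos)
    set z := (1 - t) • x₀ + t • y with hzdef
    have hzconv : u z ≤ ((1-t : ℝ) : EReal) * u x₀ + ((t : ℝ) : EReal) * u y :=
      hconv x₀ y (1 - t) t (by linarith) ht0.le (by ring)
    have hznorm : R ≤ ‖z‖ := by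
      have hz' : z - x₀ = t • (y - x₀) := by
        rw [hzdef]
        module
      have hn : ‖z - x₀‖ = t * d := by
        rw [hz', norm_smul, Real.norm_eq_abs, abs_of_pos ht0]
      linarith [htd, norm_sub_le z x₀]
    have hcz : ((a+1 : ℝ) : EReal) ≤ u z := hR z hznorm
    have hkey : ((a+1 : ℝ) : EReal) ≤ ((1-t : ℝ) : EReal) * ((a:ℝ) : EReal) + ((t : ℝ) : EReal) * u y := by
      rw [← hux₀]
      exact hcz.trans hzconv
    rcases eq_or_ne (u y) ⊤ with htop | htop
    · rw [htop]; exact le_top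
    · have huy : u y = ((u y).toReal : EReal) := (EReal.coe_toReal htop (hbot y)).symm
      set r : ℝ := (u y).toReal with hrdef
      rw [huy] at hkey
      rw [← EReal.coe_mul, ← EReal.coe_mul, ← EReal.coe_add, EReal.coe_le_coe_iff] at hkey
      rw [huy, EReal.coe_le_coe_iff]
      have h5 : 1 ≤ t * (r - a) := by nlinarith
      have h6 : d ≤ R' * (r - a) := by nlinarith
      have h7 : ‖y‖ ≤ d + ‖x₀‖ := by
        have := norm_sub_norm_le y x₀
        linarith
      have h8 : ‖x₀‖ / R' - a ≤ C := le_max_right _ _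
      have h9 : d / R' ≤ r - a := (div_le_iff₀' hR'pos).mpr h6
      have h10 : ‖y‖ / R' ≤ d/R' + ‖x₀‖/R' := by
        rw [← add_div]
        gcongr
      have : (1/R') * ‖y‖ = ‖y‖ / R' := by ring
      linarith

/-- A convex, proper, lsc function `u : ℝⁿ → (-∞,∞]` is
coercive iff `0 ∈ int dom u*`. -/
theorem stmt2 (n : ℕ) (u : EuclideanSpace ℝ (Fin n) → EReal)
    (hconv : ErealConvexOn u) (hproper : EProper u) (hlsc : LowerSemicontinuous u) :
    ECoercive u ↔ (0 : EuclideanSpace ℝ (Fin n)) ∈ interior {x | conj u x < ⊤} := by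
  constructor
  · intro hcoer
    obtain ⟨ε, C, hε, hmin⟩ := linearMinorant hconv hproper hlsc hcoer
    refine mem_interior.mpr ⟨Metric.ball 0 (ε/2), ?_, Metric.isOpen_ball,
      Metric.mem_ball_self (by positivity)⟩
    intro x hx
    rw [mem_ball_zero_iff] at hx
    have hbound : conj u x ≤ ((C : ℝ) : EReal) := by
      refine iSup_le fun y => ?_
      refine le_trans (erealSubLe (inner ℝ x y) (ε * ‖y‖ - C) (u y) (hmin y)) ?_
      rw [EReal.coe_le_coe_iff]
      have h1 : (inner ℝ x y : ℝ) ≤ ‖x‖ * ‖y‖ := real_inner_le_norm x y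
      have h2 : ‖x‖ * ‖y‖ ≤ (ε/2) * ‖y‖ :=
        mul_le_mul_of_nonneg_right hx.le (norm_nonneg y)
      nlinarith [norm_nonneg y]
    exact lt_of_le_of_lt hbound (EReal.coe_lt_top C)
  · intro hint M
    obtain ⟨ε, hε, hball⟩ := Metric.mem_nhds_iff.mp (mem_interior_iff_mem_nhds.mp hint)
    rcases Nat.eq_zero_or_pos n with rfl | hn
    · refine ⟨1, fun x hx => absurd hx ?_⟩
      have hx0 : x = 0 := Subsingleton.elim x 0
      rw [hx0, norm_zero]
      norm_num
    · have hbot := hproper.1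
      have hsn : (0:ℝ) < Real.sqrt n := Real.sqrt_pos.mpr (by exact_mod_cast hn)
      -- uniform bound on conj at the points ±(ε/2)eᵢ
      have key : ∀ i : Fin n, ∀ s : ℝ, |s| < ε →
          ∃ c : ℝ, ∀ y, ((inner ℝ (EuclideanSpace.single i s) y : ℝ) : EReal) - u y ≤ (c : EReal) := by
        intro i s hs
        have hmem : EuclideanSpace.single i s ∈ Metric.ball (0 : EuclideanSpace ℝ (Fin n)) ε := by
          rw [mem_ball_zero_iff, EuclideanSpace.norm_single]
          exact hs
        obtain ⟨c, hc⟩ := erealExistsGe _ (hball hmem)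
        exact ⟨c, fun y => le_trans (le_iSup (fun y => ((inner ℝ (EuclideanSpace.single i s) y : ℝ) : EReal) - u y) y) hc⟩
      have hεabs : |ε/2| < ε := by rw [abs_of_pos (by positivity)]; linarith
      have hεabs' : |(-(ε/2))| < ε := by rw [abs_neg]; exact hεabs
      choose g hg using fun i : Fin n => key i (ε/2) hεabs
      choose h' hh' using fun i : Fin n => key i (-(ε/2)) hεabs'
      have hnune : (Finset.univ : Finset (Fin n)).Nonempty := ⟨⟨0, hn⟩, Finset.mem_univ _⟩
      set C : ℝ := Finset.univ.sup' hnune (fun i => max (g i) (h' i)) with hCdef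
      have hgC : ∀ i, g i ≤ C := fun i =>
        le_trans (le_max_left _ _)
          (Finset.le_sup' (fun i => max (g i) (h' i)) (Finset.mem_univ i))
      have hhC : ∀ i, h' i ≤ C := fun i =>
        le_trans (le_max_right _ _)
          (Finset.le_sup' (fun i => max (g i) (h' i)) (Finset.mem_univ i))
      have hlow : ∀ y, ∀ i : Fin n, ((ε/2 * |y i| - C : ℝ) : EReal) ≤ u y := by
        intro y i
        rcases le_or_gt 0 (y i) with hyi | hyi
        · have h1 : ((inner ℝ (EuclideanSpace.single i (ε/2)) y : ℝ) : EReal) - u y ≤ ((C : ℝ) : EReal) :=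
            le_trans (hg i y) (EReal.coe_le_coe_iff.mpr (hgC i))
          have h2 := erealSubGe _ C (u y) (hbot y) h1
          have h3 : (inner ℝ (EuclideanSpace.single i (ε/2)) y : ℝ) = ε/2 * y i := by
            simp [EuclideanSpace.inner_single_left]
          rw [h3] at h2
          rwa [abs_of_nonneg hyi]
        · have h1 : ((inner ℝ (EuclideanSpace.single i (-(ε/2))) y : ℝ) : EReal) - u y ≤ ((C : ℝ) : EReal) :=
            le_trans (hh' i y) (EReal.coe_le_coe_iff.mpr (hhC i))
          have h2 := erealSubGe _ C (u y) (hbot y) h1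
          have h3 : (inner ℝ (EuclideanSpace.single i (-(ε/2))) y : ℝ) = ε/2 * |y i| := by
            simp [EuclideanSpace.inner_single_left, abs_of_neg hyi]
          rwa [h3] at h2
      -- every y has a big coordinate
      have hbig : ∀ y : EuclideanSpace ℝ (Fin n), ∃ i : Fin n, ‖y‖ ≤ Real.sqrt n * |y i| := by
        intro y
        obtain ⟨i, _, hi⟩ := Finset.exists_max_image Finset.univ (fun j => |y j|) hnune
        refine ⟨i, ?_⟩
        have h1 : ‖y‖ = Real.sqrt (∑ j, ‖y j‖ ^ 2) := EuclideanSpace.norm_eq y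
        have h2 : (∑ j, ‖y j‖ ^ 2) ≤ (n : ℝ) * |y i| ^ 2 := by
          calc (∑ j, ‖y j‖ ^ 2) ≤ ∑ _j : Fin n, |y i| ^ 2 := by
                refine Finset.sum_le_sum fun j _ => ?_
                rw [Real.norm_eq_abs]
                exact pow_le_pow_left₀ (abs_nonneg _) (hi j (Finset.mem_univ j)) 2
            _ = (n : ℝ) * |y i| ^ 2 := by simp [Finset.sum_const]
        rw [h1]
        calc Real.sqrt (∑ j, ‖y j‖ ^ 2) ≤ Real.sqrt ((n : ℝ) * |y i| ^ 2) :=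
              Real.sqrt_le_sqrt h2
          _ = Real.sqrt n * |y i| := by
              rw [Real.sqrt_mul (by positivity), Real.sqrt_sq (abs_nonneg _)]
      set δ : ℝ := ε / (2 * Real.sqrt n) with hδdef
      have hδ : 0 < δ := by positivity
      refine ⟨(M + C)/δ, fun y hy => ?_⟩
      obtain ⟨i, hi⟩ := hbig y
      have h4 : M + C ≤ δ * ‖y‖ := by
        rw [div_le_iff₀ hδ] at hy
        linarith [hy]
      have h5 : δ * ‖y‖ ≤ ε/2 * |y i| := by
        have := mul_le_mul_of_nonneg_left hi hδ.le
        have hδs : δ * Real.sqrt n = ε/2 := by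
          rw [hδdef]; field_simp
        calc δ * ‖y‖ ≤ δ * (Real.sqrt n * |y i|) := this
          _ = (δ * Real.sqrt n) * |y i| := by ring
          _ = ε/2 * |y i| := by rw [hδs]
      refine le_trans ?_ (hlow y i)
      rw [EReal.coe_le_coe_iff]
      linarith
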